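/- Every order embedding between posets is a regular monomorphism in the category of posets, i.e., it is an equalizer of some pair of monotone maps. -/

import Mathlib

open CategoryTheory Limits

/-- The underlying monotone map of a morphism of posets. -/
def homFn {X Y : PartOrd} (f : X ⟶ Y) : X →o Y := f.hom

/-- Every order embedding between posets is a regular monomorphism in the
category of posets: it is an equalizer of some pair of monotone maps. -/
theorem stmt_5 {X Y : PartOrd} (f : X ⟶ Y)
    (hemb : ∀ x y : X, x ≤ y ↔ homFn f x ≤ homFn f y) :
    Nonempty (RegularMono f) := by
  classical
  -- set of points not in the range
  let B : Type _ := {y : Y // ∀ a : X, homFn f a ≠ y}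
  let Z : PartOrd := PartOrd.of (B → Prop)
  let g : Y ⟶ Z := PartOrd.ofHom ⟨fun y b => b.1 ≤ y, fun y y' h b hb => le_trans hb h⟩
  let h : Y ⟶ Z := PartOrd.ofHom ⟨fun y b => b.1 ≤ y ∧ b.1 ≠ y,
    fun y y' hyy' b hb => ⟨le_trans hb.1 hyy', fun e => hb.2 (le_antisymm hb.1 (e ▸ hyy'))⟩⟩
  have key : ∀ y : Y, homFn g y = homFn h y ↔ ∃ a : X, homFn f a = y := by
    intro y
    constructor
    · intro he
      by_contra hn
      push_neg at hn
      have : homFn g y ⟨y, hn⟩ = homFn h y ⟨y, hn⟩ := congrFun he _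
      simp only [g, h, homFn] at this
      exact (this.mp le_rfl).2 rfl
    · rintro ⟨a, rfl⟩
      funext b
      simp only [g, h, homFn, eq_iff_iff]
      exact ⟨fun hb => ⟨hb, fun e => b.2 a e.symm⟩, fun hb => hb.1⟩
  have hw : f ≫ g = f ≫ h := by
    apply PartOrd.hom_ext; apply OrderHom.ext; funext x
    exact (key (homFn f x)).mpr ⟨x, rfl⟩
  have finj : Function.Injective (homFn f) := fun a b hab =>
    le_antisymm ((hemb a b).mpr hab.le) ((hemb b a).mpr hab.ge)
  refine ⟨⟨Z, g, h, hw, ?_⟩⟩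
  have hs : ∀ (s : Fork g h) (w : s.pt), ∃ a : X, homFn f a = homFn (Fork.ι s) w := by
    intro s w
    exact (key _).mp (congrFun (congrArg (fun k => ⇑(homFn k)) s.condition) w)
  refine Fork.IsLimit.mk _
    (fun s => PartOrd.ofHom ⟨fun w => (hs s w).choose, fun w w' hww' => ?_⟩)
    (fun s => ?_) (fun s m hm => ?_)
  · apply (hemb _ _).mpr
    show homFn f _ ≤ homFn f _
    rw [(hs s w).choose_spec, (hs s w').choose_spec]
    exact (homFn (Fork.ι s)).monotone hww'
  · apply PartOrd.hom_ext; apply OrderHom.ext; funext w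
    exact (hs s w).choose_spec
  · apply PartOrd.hom_ext; apply OrderHom.ext; funext w
    apply finj
    show homFn f _ = homFn f _
    show homFn f (homFn m w) = homFn f ((hs s w).choose)
    rw [(hs s w).choose_spec]
    exact congrFun (congrArg (fun k => ⇑(homFn k)) hm) w
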